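/- In the polynomial ring ℝ[x_A, x_B, κ₁, κ₂], let 𝓛 = {(x_A, x_B, κ₁, κ₂) ∈ ℝ⁴_{>0} : κ₁x_B − κ₂x_A²x_B = 0} = {(x_A, x_B, κ₁, κ₂) ∈ ℝ⁴_{>0} : x_A = √(κ₁/κ₂)} (the positive steady-state/rate locus of the network {B → A, 2A+B → A+2B}). Then the vanishing ideal I(𝓛) = {h ∈ ℝ[x_A, x_B, κ₁, κ₂] : h(p) = 0 for all p ∈ 𝓛} equals the principal ideal ⟨κ₁ − κ₂x_A²⟩. -/

import Mathlib

open MvPolynomial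

private lemma pos_vanish_zero : ∀ {n : ℕ} (p : MvPolynomial (Fin n) ℝ),
    (∀ x : Fin n → ℝ, (∀ i, 0 < x i) → eval x p = 0) → p = 0 := by
  intro n
  induction n with
  | zero =>
    intro p h
    apply (MvPolynomial.isEmptyRingEquiv ℝ (Fin 0)).injective
    rw [RingEquiv.map_zero]
    convert h finZeroElim (fun i => i.elim0)
    obtain ⟨r, rfl⟩ := (isEmptyRingEquiv ℝ (Fin 0)).symm.surjective p
    simp
    exact MvPolynomial.coeff_zero_C r
  | succ n ih =>
    intro p h
    apply (finSuccEquiv ℝ n).injective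
    simp only [map_zero]
    ext k : 1
    rw [Polynomial.coeff_zero]
    apply ih
    intro x hx
    have hQ : Polynomial.map (eval x) (finSuccEquiv ℝ n p) = 0 := by
      apply Polynomial.eq_zero_of_infinite_isRoot
      apply Set.Infinite.mono (s := Set.Ioi (0 : ℝ))
      · intro y hy
        have hpos : ∀ i, 0 < (Fin.cons y x : Fin (n + 1) → ℝ) i := by
          intro i
          refine Fin.cases ?_ ?_ i
          · simpa using hy
          · intro j; simpa using hx j
        have := h (Fin.cons y x) hpos
        rw [eval_eq_eval_mv_eval'] at this
        exact this
      · exact Set.Ioi_infinite 0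
    have := congrArg (fun q => Polynomial.coeff q k) hQ
    simpa [Polynomial.coeff_map] using this

private noncomputable def subst2 : MvPolynomial (Fin 4) ℝ →ₐ[ℝ] MvPolynomial (Fin 4) ℝ :=
  aeval (fun i => if i = 2 then X 3 * (X 0) ^ 2 else X i)

private lemma sub_subst2_mem (h : MvPolynomial (Fin 4) ℝ) :
    h - subst2 h ∈ Ideal.span {(X 2 - X 3 * (X 0) ^ 2 : MvPolynomial (Fin 4) ℝ)} := by
  set I := Ideal.span {(X 2 - X 3 * (X 0) ^ 2 : MvPolynomial (Fin 4) ℝ)}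
  have key : (Ideal.Quotient.mkₐ ℝ I).comp subst2 = Ideal.Quotient.mkₐ ℝ I := by
    apply MvPolynomial.algHom_ext
    intro i
    simp only [AlgHom.comp_apply, subst2, aeval_X, Ideal.Quotient.mkₐ_eq_mk]
    fin_cases i
    · rfl
    · rfl
    · rw [Ideal.Quotient.mk_eq_mk_iff_sub_mem]
      have : (X 3 * (X 0) ^ 2 - X 2 : MvPolynomial (Fin 4) ℝ) =
          -(X 2 - X 3 * (X 0) ^ 2) := by ring
      rw [show ((2 : Fin 4)) = (⟨2, by norm_num⟩ : Fin 4) from rfl] at *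
      simpa [this] using I.neg_mem (Ideal.subset_span (Set.mem_singleton _))
    · rfl
  have := congrArg (fun φ => φ h) key
  simp only [AlgHom.comp_apply, Ideal.Quotient.mkₐ_eq_mk] at this
  rwa [← Ideal.Quotient.mk_eq_mk_iff_sub_mem, eq_comm]

private lemma eval_subst2 (h : MvPolynomial (Fin 4) ℝ) (p : Fin 4 → ℝ) :
    eval p (subst2 h) = eval (fun i => if i = 2 then p 3 * (p 0) ^ 2 else p i) h := by
  rw [subst2, aeval_def, eval₂_comp_left (eval p)]
  rw [show (eval (fun i => if i = 2 then p 3 * (p 0) ^ 2 else p i) : MvPolynomial (Fin 4) ℝ →+* ℝ) h =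
      eval₂ (RingHom.id ℝ) (fun i => if i = 2 then p 3 * (p 0) ^ 2 else p i) h from rfl]
  congr 1
  · ext r
    simp [algebraMap_eq]
  · funext i
    simp only [Function.comp_apply]
    split <;> simp

/-- For the network `{B → A, 2A+B → A+2B}` with variables `x_A = X 0`, `x_B = X 1`,
`κ₁ = X 2`, `κ₂ = X 3`, the vanishing ideal of the positive steady-state/rate locus
`𝓛 = {(x_A,x_B,κ₁,κ₂) ∈ ℝ⁴_{>0} : κ₁x_B - κ₂x_A²x_B = 0}` is the principal ideal
`⟨κ₁ - κ₂x_A²⟩`. -/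
theorem stmt_19 :
    {h : MvPolynomial (Fin 4) ℝ |
        ∀ p : Fin 4 → ℝ, (∀ j, 0 < p j) →
          p 2 * p 1 - p 3 * (p 0) ^ 2 * p 1 = 0 → eval p h = 0}
      = ↑(Ideal.span {(X 2 - X 3 * (X 0) ^ 2 : MvPolynomial (Fin 4) ℝ)}) := by
  ext h
  simp only [Set.mem_setOf_eq, SetLike.mem_coe]
  constructor
  · intro hvan
    have hz : subst2 h = 0 := by
      apply pos_vanish_zero
      intro x hx
      rw [eval_subst2]
      apply hvan
      · intro j
        split
        · exact mul_pos (hx 3) (pow_pos (hx 0) 2)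
        · exact hx j
      · have e0 : (if (0 : Fin 4) = 2 then x 3 * x 0 ^ 2 else x 0) = x 0 := if_neg (by decide)
        have e1 : (if (1 : Fin 4) = 2 then x 3 * x 0 ^ 2 else x 1) = x 1 := if_neg (by decide)
        have e2 : (if (2 : Fin 4) = 2 then x 3 * x 0 ^ 2 else x 2) = x 3 * x 0 ^ 2 := if_pos rfl
        have e3 : (if (3 : Fin 4) = 2 then x 3 * x 0 ^ 2 else x 3) = x 3 := if_neg (by decide)
        rw [e0, e1, e2, e3]
        ring
    have := sub_subst2_mem h
    rwa [hz, sub_zero] at this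
  · intro hmem p hp hrel
    obtain ⟨q, hq⟩ := Ideal.mem_span_singleton'.mp hmem
    rw [← hq]
    have h1 : p 1 ≠ 0 := ne_of_gt (hp 1)
    have hfac : p 2 - p 3 * (p 0) ^ 2 = 0 := by
      have : (p 2 - p 3 * (p 0) ^ 2) * p 1 = 0 := by linarith [hrel]
      rcases mul_eq_zero.mp this with h' | h'
      · exact h'
      · exact absurd h' h1
    simp [hfac]
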